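/- Let f,g∈ℋ with f(x)≥g(x) for all x∈[0,1] and f≠g. Let 0<v≤1 and define h:[0,v]→ℝ by h(x)=v·f(x/v). Suppose that for every δ>0 there exists x∈(0,δ) with h(x)>g(x). Then either v=1 and h=f>g on (0,1), or v<1 and there exists u∈(0,v) such that h(x)>g(x) for x∈(0,u), h(x)<g(x) for x∈(u,v], and h'(u)≤g'(u). -/

import Mathlib

open Set Polynomial

section Aux

lemma factor3 (d : Polynomial ℝ) (hd : d ≠ 0) (hdeg : d.degree ≤ 3) (s : ℝ) (hs : s ≠ 0)
    (h0 : d.eval 0 = 0) (hsr : d.eval s = 0) :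
    ∃ a b : ℝ, d = X * (X - C s) * (C a * X + C b) := by
  obtain ⟨q, hq⟩ : (X : Polynomial ℝ) ∣ d := X_dvd_iff.mpr (by rw [coeff_zero_eq_eval_zero]; exact h0)
  have hqs : q.eval s = 0 := by
    have := hsr; rw [hq] at this; simp at this; tauto
  obtain ⟨L, hL⟩ : (X - C s) ∣ q := dvd_iff_isRoot.mpr hqs
  have hdL : d = X * (X - C s) * L := by rw [hq, hL, mul_assoc]
  have hLne : L ≠ 0 := by rintro rfl; simp [hdL] at hd
  have hXs : (X - C s : Polynomial ℝ) ≠ 0 := X_sub_C_ne_zero s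
  have hnd : d.natDegree ≤ 3 := natDegree_le_iff_degree_le.mpr hdeg
  have hnd2 : d.natDegree = 2 + L.natDegree := by
    rw [hdL, natDegree_mul (mul_ne_zero X_ne_zero hXs) hLne,
      natDegree_mul X_ne_zero hXs, natDegree_X, natDegree_X_sub_C]
  have hL1 : L.natDegree ≤ 1 := by omega
  have hLdeg : L.degree ≤ 1 := degree_le_of_natDegree_le hL1
  exact ⟨L.coeff 1, L.coeff 0, by
    rw [hdL]; rw [← L.eq_X_add_C_of_degree_le_one hLdeg]⟩

lemma posOnIoo (d : Polynomial ℝ) (hd : d ≠ 0) (hdeg : d.degree ≤ 3)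
    (h0 : d.eval 0 = 0) (h1 : d.eval 1 = 0)
    (hnn : ∀ x ∈ Set.Icc (0:ℝ) 1, 0 ≤ d.eval x) :
    ∀ x ∈ Set.Ioo (0:ℝ) 1, 0 < d.eval x := by
  obtain ⟨a, b, hab⟩ := factor3 d hd hdeg 1 one_ne_zero h0 h1
  have hev : ∀ x : ℝ, d.eval x = x * (x - 1) * (a * x + b) := by
    intro x; rw [hab]; simp
  have habnn : ∀ x ∈ Set.Ioo (0:ℝ) 1, a * x + b ≤ 0 := by
    rintro x ⟨hx0, hx1⟩
    have := hnn x ⟨hx0.le, hx1.le⟩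
    rw [hev] at this
    by_contra hc
    push_neg at hc
    nlinarith [mul_pos (mul_pos hx0 (by linarith : (0:ℝ) < 1 - x)) hc]
  rintro x ⟨hx0, hx1⟩
  rw [hev]
  have hle := habnn x ⟨hx0, hx1⟩
  rcases lt_or_eq_of_le hle with hlt | heq
  · nlinarith [mul_pos (mul_pos hx0 (by linarith : (0:ℝ) < 1 - x)) (by linarith : 0 < -(a*x+b))]
  · exfalso
    rcases lt_trichotomy a 0 with ha | ha | ha
    · have := habnn (x/2) ⟨by linarith, by linarith⟩; nlinarith
    · subst ha
      have hb : b = 0 := by linarith [heq]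
      have : d = 0 := by rw [hab, hb]; simp
      exact hd this
    · have := habnn ((x+1)/2) ⟨by linarith, by linarith⟩; nlinarith

end Aux

/-- The class ℋ: nonzero real polynomials of degree at most 3 with `f(0)=f(1)=0`,
nonnegative on `[0,1]`, and with exactly one critical point `c` in `[0,1]`. -/
structure HClass (f : Polynomial ℝ) (c : ℝ) : Prop where
  deg : f.degree ≤ 3
  ne0 : f ≠ 0
  f0 : f.eval 0 = 0
  f1 : f.eval 1 = 0
  nonneg : ∀ x ∈ Set.Icc (0:ℝ) 1, 0 ≤ f.eval x
  hc : c ∈ Set.Icc (0:ℝ) 1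
  crit : f.derivative.eval c = 0
  uniq : ∀ y ∈ Set.Icc (0:ℝ) 1, f.derivative.eval y = 0 → y = c

lemma hclass_pos {g : Polynomial ℝ} {c : ℝ} (hg : HClass g c) :
    ∀ x ∈ Set.Ioo (0:ℝ) 1, 0 < g.eval x := by
  obtain ⟨m, hm, hmax⟩ := isCompact_Icc.exists_isMaxOn (α := ℝ) (s := Icc (0:ℝ) 1)
    ⟨0, by norm_num⟩ (g.continuous.continuousOn.congr (fun x _ => rfl) :
      ContinuousOn (fun x => g.eval x) (Icc 0 1))
  have hposx : ∃ x₁ ∈ Icc (0:ℝ) 1, 0 < g.eval x₁ := by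
    by_contra hcon
    push_neg at hcon
    have hall : ∀ x ∈ Icc (0:ℝ) 1, g.eval x = 0 :=
      fun x hx => le_antisymm (hcon x hx) (hg.nonneg x hx)
    have hsub : Icc (0:ℝ) 1 ⊆ {x | g.IsRoot x} := fun x hx => hall x hx
    exact Set.Icc_infinite (by norm_num : (0:ℝ) < 1) ((finite_setOf_isRoot hg.ne0).subset hsub)
  obtain ⟨x₁, hx₁, hx₁pos⟩ := hposx
  have hmpos : 0 < g.eval m := lt_of_lt_of_le hx₁pos (hmax hx₁)
  have hmI : m ∈ Ioo (0:ℝ) 1 := by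
    rcases hm with ⟨hm0, hm1⟩
    constructor
    · rcases lt_or_eq_of_le hm0 with h | h
      · exact h
      · exfalso; rw [← h] at hmpos; rw [hg.f0] at hmpos; exact lt_irrefl 0 hmpos
    · rcases lt_or_eq_of_le hm1 with h | h
      · exact h
      · exfalso; rw [h] at hmpos; rw [hg.f1] at hmpos; exact lt_irrefl 0 hmpos
  have hlm : IsLocalMax (fun x => g.eval x) m := hmax.isLocalMax (Icc_mem_nhds hmI.1 hmI.2)
  have hdm : g.derivative.eval m = 0 := by
    have := hlm.deriv_eq_zero
    rwa [Polynomial.deriv] at this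
  have hmc : m = c := hg.uniq m hm hdm
  have hcpos : 0 < g.eval c := hmc ▸ hmpos
  rintro x ⟨hx0, hx1⟩
  by_contra hcon
  push_neg at hcon
  have hx00 : g.eval x = 0 := le_antisymm hcon (hg.nonneg x ⟨hx0.le, hx1.le⟩)
  have hlmin : IsLocalMin (fun y => g.eval y) x := by
    apply IsMinOn.isLocalMin (s := Icc (0:ℝ) 1) _ (Icc_mem_nhds hx0 hx1)
    intro y hy
    simp only [Set.mem_setOf_eq, hx00]
    exact hg.nonneg y hy
  have hdx : g.derivative.eval x = 0 := by
    have := hlmin.deriv_eq_zero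
    rwa [Polynomial.deriv] at this
  have : x = c := hg.uniq x ⟨hx0.le, hx1.le⟩ hdx
  rw [this] at hx00
  rw [hx00] at hcpos
  exact lt_irrefl 0 hcpos

theorem stmt14 (f g : Polynomial ℝ) (cf cg : ℝ) (hf : HClass f cf) (hg : HClass g cg)
    (hge : ∀ x ∈ Set.Icc (0:ℝ) 1, g.eval x ≤ f.eval x) (hfg : f ≠ g)
    (v : ℝ) (hv0 : 0 < v) (hv1 : v ≤ 1)
    (h : ℝ → ℝ) (hh : h = fun x => v * f.eval (x / v))
    (hgt : ∀ δ > 0, ∃ x ∈ Set.Ioo (0:ℝ) δ, g.eval x < h x) :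
    (v = 1 ∧ (∀ x, h x = f.eval x) ∧ (∀ x ∈ Set.Ioo (0:ℝ) 1, g.eval x < f.eval x)) ∨
    (v < 1 ∧ ∃ u ∈ Set.Ioo 0 v,
      (∀ x ∈ Set.Ioo (0:ℝ) u, g.eval x < h x) ∧
      (∀ x ∈ Set.Ioc u v, h x < g.eval x) ∧
      deriv h u ≤ g.derivative.eval u) := by
  subst hh
  replace hgt : ∀ δ > 0, ∃ x ∈ Set.Ioo (0:ℝ) δ, g.eval x < v * f.eval (x / v) := hgt
  rcases lt_or_eq_of_le hv1 with hvlt | hveq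
  · -- case v < 1
    right
    refine ⟨hvlt, ?_⟩
    set P : Polynomial ℝ := v • (f.comp (C v⁻¹ * X)) - g with hPdef
    have hPev : ∀ x : ℝ, P.eval x = v * f.eval (x / v) - g.eval x := by
      intro x
      rw [hPdef, div_eq_inv_mul]
      simp [eval_comp]
    have hPdeg : P.degree ≤ 3 := by
      apply degree_le_of_natDegree_le
      refine (natDegree_sub_le _ _).trans (max_le ?_ (natDegree_le_iff_degree_le.mpr hg.deg))
      refine (natDegree_smul_le _ _).trans ?_
      rw [natDegree_comp, natDegree_C_mul_X _ (inv_ne_zero hv0.ne')]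
      have := natDegree_le_iff_degree_le.mpr hf.deg
      omega
    have hP0 : P.eval 0 = 0 := by
      rw [hPev]; simp [hf.f0, hg.f0]
    have hgv : 0 < g.eval v := hclass_pos hg v ⟨hv0, hvlt⟩
    have hPv : P.eval v < 0 := by
      rw [hPev, div_self hv0.ne']
      rw [hf.f1]; linarith
    have hPne : P ≠ 0 := by
      intro hc; rw [hc] at hPv; simp at hPv
    have hcont : ContinuousOn (fun x => P.eval x) (univ : Set ℝ) := P.continuous.continuousOn
    -- root-between helpers
    have ivt1 : ∀ p q : ℝ, p < q → 0 < P.eval p → P.eval q < 0 → ∃ y ∈ Ioo p q, P.eval y = 0 := by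
      intro p q hpq hp hq
      have := intermediate_value_Ioo' hpq.le (P.continuous.continuousOn (s := Icc p q))
      obtain ⟨y, hy, hy0⟩ := this (show (0:ℝ) ∈ Ioo (P.eval q) (P.eval p) from ⟨hq, hp⟩)
      exact ⟨y, hy, hy0⟩
    have ivt2 : ∀ p q : ℝ, p < q → P.eval p < 0 → 0 < P.eval q → ∃ y ∈ Ioo p q, P.eval y = 0 := by
      intro p q hpq hp hq
      have := intermediate_value_Ioo hpq.le (P.continuous.continuousOn (s := Icc p q))
      obtain ⟨y, hy, hy0⟩ := this (show (0:ℝ) ∈ Ioo (P.eval p) (P.eval q) from ⟨hp, hq⟩)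
      exact ⟨y, hy, hy0⟩
    obtain ⟨x₀, hx₀I, hx₀⟩ := hgt v hv0
    have hPx₀ : 0 < P.eval x₀ := by rw [hPev]; linarith
    obtain ⟨z, hzI, hz0⟩ := ivt1 x₀ v hx₀I.2 hPx₀ hPv
    -- minimal root in (0, v]
    set S : Set ℝ := {x | x ∈ Ioc (0:ℝ) v ∧ P.eval x = 0} with hSdef
    have hSfin : S.Finite := (finite_setOf_isRoot hPne).subset (fun x hx => hx.2)
    have hSne : S.Nonempty := ⟨z, ⟨⟨hzI.1.trans' hx₀I.1, hzI.2.le⟩, hz0⟩⟩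
    obtain ⟨u, huS, humin⟩ := Set.exists_min_image S id hSfin hSne
    simp only [id] at humin
    obtain ⟨⟨hu0, huv⟩, hu00⟩ := huS
    have huv' : u < v := lt_of_le_of_ne huv (fun hc => by rw [hc] at hu00; linarith)
    -- positivity on (0,u)
    have hpos : ∀ x ∈ Ioo (0:ℝ) u, 0 < P.eval x := by
      rintro x ⟨hx0, hxu⟩
      by_contra hc
      push_neg at hc
      rcases lt_or_eq_of_le hc with hneg | hzero
      · obtain ⟨x₂, hx₂I, hx₂⟩ := hgt x hx0
        have hx₂P : 0 < P.eval x₂ := by rw [hPev]; linarith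
        obtain ⟨y, hyI, hy0⟩ := ivt1 x₂ x hx₂I.2 hx₂P hneg
        have : y ∈ S := ⟨⟨hx₂I.1.trans hyI.1, (hyI.2.trans hxu).le.trans huv⟩, hy0⟩
        have := humin y this
        linarith [hyI.2]
      · have : x ∈ S := ⟨⟨hx0, (hxu.le.trans huv)⟩, hzero⟩
        have := humin x this
        linarith
    -- factorization
    obtain ⟨a, b, hab⟩ := factor3 P hPne hPdeg u hu0.ne' hP0 hu00
    have hev : ∀ x : ℝ, P.eval x = x * (x - u) * (a * x + b) := fun x => by rw [hab]; simp
    have habneg : ∀ x ∈ Ioo (0:ℝ) u, a * x + b < 0 := by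
      rintro x ⟨hx0, hxu⟩
      have hp := hpos x ⟨hx0, hxu⟩
      rw [hev] at hp
      by_contra hcc; push_neg at hcc
      nlinarith [mul_nonneg (mul_pos hx0 (show (0:ℝ) < u - x by linarith)).le hcc]
    have hav : a * v + b < 0 := by
      have hp := hPv; rw [hev] at hp
      by_contra hcc; push_neg at hcc
      nlinarith [mul_nonneg (mul_nonneg hv0.le (show (0:ℝ) ≤ v - u by linarith)) hcc]
    have hhalf : a * (u/2) + b < 0 := habneg (u/2) ⟨by linarith, by linarith⟩
    have haub : a * u + b ≤ 0 := by
      by_contra hcc; push_neg at hcc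
      have ha : 0 < a := by nlinarith
      have hdivpos : 0 < (a*u+b)/(2*a) := div_pos hcc (by linarith)
      set w := max (u/2) (u - (a*u+b)/(2*a)) with hw
      have hw1 : w < u := max_lt (by linarith) (by linarith)
      have hw0 : 0 < w := lt_of_lt_of_le (by linarith : (0:ℝ) < u/2) (le_max_left _ _)
      have hwb := habneg w ⟨hw0, hw1⟩
      have hwge : u - (a*u+b)/(2*a) ≤ w := le_max_right _ _
      have t1 : a * (u - (a*u+b)/(2*a)) ≤ a * w := mul_le_mul_of_nonneg_left hwge ha.le
      have key : a * (u - (a*u+b)/(2*a)) = a*u - (a*u+b)/2 := by field_simp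
      linarith
    refine ⟨u, ⟨hu0, huv'⟩, ?_, ?_, ?_⟩
    · intro x hx
      have hp := hpos x hx
      rw [hPev x] at hp
      show g.eval x < v * f.eval (x / v)
      linarith
    · rintro x ⟨hux, hxv⟩
      show v * f.eval (x / v) < g.eval x
      have haxb : a * x + b < 0 := by
        by_contra hcc; push_neg at hcc
        have ha : 0 < a := by nlinarith
        have t2 : a * x ≤ a * v := mul_le_mul_of_nonneg_left hxv ha.le
        linarith
      have hx : P.eval x < 0 := by
        rw [hev]
        exact mul_neg_of_pos_of_neg
          (mul_pos (hu0.trans hux) (show (0:ℝ) < x - u by linarith)) haxb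
      rw [hPev x] at hx
      linarith
    · have hfun : (fun x : ℝ => v * f.eval (x / v)) = fun x => P.eval x + g.eval x :=
        funext fun x => by rw [hPev x]; ring
      show deriv (fun x : ℝ => v * f.eval (x / v)) u ≤ g.derivative.eval u
      rw [hfun, deriv_fun_add (P.differentiable.differentiableAt) (g.differentiable.differentiableAt),
        Polynomial.deriv, Polynomial.deriv]
      have hder : P.derivative.eval u = u * (a*u+b) := by
        rw [hab]; simp [derivative_mul]; try ring
      rw [hder]
      nlinarith [mul_nonpos_of_nonneg_of_nonpos hu0.le haub]
  · -- case v = 1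
    left
    subst hveq
    refine ⟨rfl, fun x => by simp, ?_⟩
    intro x hx
    have hd := posOnIoo (f - g) (sub_ne_zero.mpr hfg)
      ((degree_sub_le f g).trans (max_le hf.deg hg.deg))
      (by simp [hf.f0, hg.f0]) (by simp [hf.f1, hg.f1])
      (fun y hy => by rw [eval_sub]; linarith [hge y hy]) x hx
    rw [eval_sub] at hd
    linarith
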